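/- arXiv:1306.0630 — 3 statements merged into one kernel-verified Lean document; each statement's English description precedes it below -/
import Mathlib

section
/- For every sufficiently large n, there exists a boolean function g : {0,1}^n → {0,1} such that g(0^n) = 0, the fractional block sensitivity of g at the all-zeros input satisfies bs*_{0^n}(g) ≤ 200, more generally bs*_0(g) ≤ 200, and the zero-certificate complexity satisfies C_0(g) ≥ n/100. -/
open Filter

namespace BS

variable {I : Type*} [Fintype I] [DecidableEq I]

/-- Flip the bits of `x` indexed by `B`. -/
def flipSet (x : I → Bool) (B : Finset I) : I → Bool :=
  fun i => if i ∈ B then !(x i) else x i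

/-- `B` is a block of `f` at `x`. -/
def IsBlock (f : (I → Bool) → Bool) (x : I → Bool) (B : Finset I) : Prop :=
  f (flipSet x B) ≠ f x

/-- Block sensitivity of `f` at `x`: the maximum number of pairwise disjoint blocks. -/
noncomputable def bsAt (f : (I → Bool) → Bool) (x : I → Bool) : ℕ :=
  sSup {k | ∃ B : Fin k → Finset I, (∀ t, IsBlock f x (B t)) ∧
    ∀ t t', t ≠ t' → Disjoint (B t) (B t')}

/-- Block sensitivity of `f`. -/
noncomputable def bs (f : (I → Bool) → Bool) : ℕ :=
  sSup {k | ∃ x, k = bsAt f x}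

/-- `b`-block sensitivity of `f`. -/
noncomputable def bsb (f : (I → Bool) → Bool) (b : Bool) : ℕ :=
  sSup {k | ∃ x, f x = b ∧ k = bsAt f x}

/-- `M`-fold block sensitivity of `f` at `x`. -/
noncomputable def bsMAt (f : (I → Bool) → Bool) (M : ℕ) (x : I → Bool) : ℕ :=
  sSup {k | ∃ B : Fin k → Finset I, (∀ t, IsBlock f x (B t)) ∧
    ∀ i : I, (Finset.univ.filter (fun t => i ∈ B t)).card ≤ M}

/-- `M`-fold `b`-block sensitivity of `f`. -/
noncomputable def bsMb (f : (I → Bool) → Bool) (M : ℕ) (b : Bool) : ℕ :=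
  sSup {k | ∃ x, f x = b ∧ k = bsMAt f M x}

/-- Fractional block sensitivity of `f` at `x`. -/
noncomputable def fbsAt (f : (I → Bool) → Bool) (x : I → Bool) : ℝ :=
  sSup {s | ∃ lam : Finset I → ℝ, (∀ B, 0 ≤ lam B) ∧
    (∀ B, ¬ IsBlock f x B → lam B = 0) ∧
    (∀ i : I, ∑ B ∈ Finset.univ.filter (fun B : Finset I => i ∈ B), lam B ≤ 1) ∧
    s = ∑ B : Finset I, lam B}

/-- Fractional block sensitivity of `f`. -/
noncomputable def fbs (f : (I → Bool) → Bool) : ℝ :=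
  sSup {s | ∃ x, s = fbsAt f x}

/-- Fractional `b`-block sensitivity of `f`. -/
noncomputable def fbsb (f : (I → Bool) → Bool) (b : Bool) : ℝ :=
  sSup {s | ∃ x, f x = b ∧ s = fbsAt f x}

/-- Certificate complexity of `f` at `x`. -/
noncomputable def CAt (f : (I → Bool) → Bool) (x : I → Bool) : ℕ :=
  sInf {k | ∃ S : Finset I, (∀ B, IsBlock f x B → (S ∩ B).Nonempty) ∧ k = S.card}

/-- Certificate complexity of `f`. -/
noncomputable def Cm (f : (I → Bool) → Bool) : ℕ :=
  sSup {k | ∃ x, k = CAt f x}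

/-- `b`-certificate complexity of `f`. -/
noncomputable def Cb (f : (I → Bool) → Bool) (b : Bool) : ℕ :=
  sSup {k | ∃ x, f x = b ∧ k = CAt f x}

/-- Fractional certificate complexity of `f` at `x`. -/
noncomputable def fCAt (f : (I → Bool) → Bool) (x : I → Bool) : ℝ :=
  sInf {s | ∃ w : I → ℝ, (∀ i, 0 ≤ w i ∧ w i ≤ 1) ∧
    (∀ B, IsBlock f x B → 1 ≤ ∑ i ∈ B, w i) ∧ s = ∑ i, w i}

/-- Fractional certificate complexity of `f`. -/
noncomputable def fC (f : (I → Bool) → Bool) : ℝ :=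
  sSup {s | ∃ x, s = fCAt f x}

/-- Composition `f ∘ g` of boolean functions. -/
def comp {J : Type*} [Fintype J] [DecidableEq J]
    (f : (I → Bool) → Bool) (g : (J → Bool) → Bool) :
    ((I × J) → Bool) → Bool :=
  fun x => f (fun i => g (fun j => x (i, j)))

/-- `k`-fold iterated composition `f^(k)` of an `n`-variate boolean function; the
variables of `f^(k)` are indexed by strings in `Fin k → Fin n`.  `f^(0)` is the
univariate identity function. -/
def iter {n : ℕ} (f : (Fin n → Bool) → Bool) :
    (k : ℕ) → ((Fin k → Fin n) → Bool) → Bool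
  | 0, x => x (fun i => i.elim0)
  | k + 1, x => f (fun i => iter f k (fun s => x (Fin.cons i s)))

/-- Spectral radius of a real square matrix: the maximum of `|μ|` over the complex
eigenvalues `μ` of the matrix. -/
noncomputable def specRad {m : Type*} [Fintype m] [DecidableEq m]
    (A : Matrix m m ℝ) : ℝ :=
  sSup {r | ∃ μ : ℂ, μ ∈ spectrum ℂ (A.map Complex.ofReal) ∧ r = ‖μ‖}

end BS


namespace BSAux
open Finset

variable {n : ℕ}

open Finset

variable {n : ℕ}

/-- Hamming distance. -/
def hd (x y : Fin n → Bool) : ℕ := (Finset.univ.filter fun i => x i ≠ y i).card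

lemma hd_comm (x y : Fin n → Bool) : hd x y = hd y x := by
  unfold hd
  congr 1
  apply Finset.filter_congr
  intro i _
  simp [ne_comm]

lemma hd_eq_zero {x y : Fin n → Bool} (h : hd x y = 0) : x = y := by
  funext i
  by_contra hne
  have hi : i ∈ Finset.univ.filter fun i => x i ≠ y i := by simp [hne]
  rw [hd, Finset.card_eq_zero] at h
  simp [h] at hi

lemma hd_triangle (x y z : Fin n → Bool) : hd x z ≤ hd x y + hd y z := by
  unfold hd
  calc (Finset.univ.filter fun i => x i ≠ z i).card
      ≤ ((Finset.univ.filter fun i => x i ≠ y i) ∪ (Finset.univ.filter fun i => y i ≠ z i)).card := by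
        apply Finset.card_le_card
        intro i hi
        simp only [Finset.mem_filter, Finset.mem_univ, true_and] at hi
        simp only [Finset.mem_union, Finset.mem_filter, Finset.mem_univ, true_and]
        by_contra h
        push_neg at h
        exact hi (h.1.symm ▸ h.2 ▸ rfl)
    _ ≤ _ := Finset.card_union_le _ _

lemma flipSet_eq_iff (x c : Fin n → Bool) (B : Finset (Fin n)) :
    BS.flipSet x B = c ↔ B = Finset.univ.filter fun i => x i ≠ c i := by
  constructor
  · rintro rfl
    ext i
    simp only [Finset.mem_filter, Finset.mem_univ, true_and, BS.flipSet]
    by_cases h : i ∈ B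
    · simp only [h, if_true, iff_true]
      cases x i <;> simp [h]
    · simp [h]
  · rintro rfl
    funext i
    by_cases h : x i = c i
    · simp [BS.flipSet, h]
    · simp only [BS.flipSet, Finset.mem_filter, Finset.mem_univ, true_and, ne_eq, h,
        not_false_iff, if_true]
      revert h; cases x i <;> cases c i <;> simp

lemma flipSet_empty (x : Fin n → Bool) : BS.flipSet x ∅ = x := by
  funext i; simp [BS.flipSet]

lemma block_nonempty {f : (Fin n → Bool) → Bool} {x : Fin n → Bool} {B : Finset (Fin n)}
    (h : BS.IsBlock f x B) : B.Nonempty := by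
  rcases Finset.eq_empty_or_nonempty B with rfl | hne
  · rw [BS.IsBlock, flipSet_empty] at h
    exact absurd rfl h
  · exact hne


lemma fbsAt_le_of_cover {f : (Fin n → Bool) → Bool} {x : Fin n → Bool}
    (w : Fin n → ℝ) (hw0 : ∀ i, 0 ≤ w i)
    (hwB : ∀ B : Finset (Fin n), BS.IsBlock f x B → 1 ≤ ∑ i ∈ B, w i)
    (hwT : ∑ i, w i ≤ 200) : BS.fbsAt f x ≤ 200 := by
  apply Real.sSup_le _ (by norm_num)
  rintro s ⟨lam, h0, hblk, hcap, rfl⟩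
  have key : ∀ B : Finset (Fin n), lam B ≤ ∑ i ∈ B, lam B * w i := by
    intro B
    rw [← Finset.mul_sum]
    by_cases hB : BS.IsBlock f x B
    · exact le_mul_of_one_le_right (h0 B) (hwB B hB)
    · rw [hblk B hB, zero_mul]
  calc ∑ B : Finset (Fin n), lam B
      ≤ ∑ B : Finset (Fin n), ∑ i ∈ B, lam B * w i := Finset.sum_le_sum fun B _ => key B
    _ = ∑ B : Finset (Fin n), ∑ i : Fin n, if i ∈ B then lam B * w i else 0 := by
        apply Finset.sum_congr rfl
        intro B _
        rw [Finset.sum_ite_mem, Finset.univ_inter]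
    _ = ∑ i : Fin n, ∑ B : Finset (Fin n), if i ∈ B then lam B * w i else 0 :=
        Finset.sum_comm
    _ = ∑ i : Fin n, (∑ B ∈ Finset.univ.filter (fun B : Finset (Fin n) => i ∈ B), lam B) * w i := by
        apply Finset.sum_congr rfl
        intro i _
        rw [Finset.sum_mul, Finset.sum_filter]
    _ ≤ ∑ i, w i := Finset.sum_le_sum fun i _ => mul_le_of_le_one_left (hw0 i) (hcap i)
    _ ≤ 200 := hwT

lemma card_subcube (S : Finset (Fin n)) :
    (Finset.univ.filter fun v : Fin n → Bool => ∀ i ∈ S, v i = false).card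
      = 2 ^ (n - S.card) := by
  classical
  rw [← Fintype.card_subtype]
  have e : {v : Fin n → Bool // ∀ i ∈ S, v i = false} ≃ ((Sᶜ : Finset (Fin n)) → Bool) :=
    { toFun := fun v i => v.1 i.1
      invFun := fun u => ⟨fun i => if h : i ∈ (Sᶜ : Finset (Fin n)) then u ⟨i, h⟩ else false,
        by intro i hi
           have : i ∉ (Sᶜ : Finset (Fin n)) := by simp [hi]
           simp only [dif_neg this]⟩
      left_inv := by
        rintro ⟨v, hv⟩
        ext i
        by_cases h : i ∈ (Sᶜ : Finset (Fin n))
        · simp only [dif_pos h]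
        · simp only [dif_neg h]
          rw [Finset.mem_compl, not_not] at h
          exact (hv i h).symm
      right_inv := by
        intro u
        funext i
        simp [dif_pos i.2] }
  rw [Fintype.card_congr e]
  rw [Fintype.card_fun, Fintype.card_bool, Fintype.card_coe, Finset.card_compl,
    Fintype.card_fin]

lemma card_ball (c : Fin n → Bool) (D : ℕ) :
    (Finset.univ.filter fun v : Fin n → Bool => hd v c < D).card
      ≤ ∑ j ∈ Finset.range D, n.choose j := by
  classical
  have h1 : (Finset.univ.filter fun v : Fin n → Bool => hd v c < D).card
      ≤ ((Finset.range D).biUnion fun j =>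
          Finset.powersetCard j (Finset.univ : Finset (Fin n))).card := by
    apply Finset.card_le_card_of_injOn
      (fun v => Finset.univ.filter fun i => v i ≠ c i)
    · intro v hv
      simp only [Finset.mem_coe, Finset.mem_filter, Finset.mem_univ, true_and] at hv
      rw [Finset.mem_coe, Finset.mem_biUnion]
      refine ⟨(Finset.univ.filter fun i => v i ≠ c i).card, ?_, ?_⟩
      · rw [Finset.mem_range]; exact hv
      · rw [Finset.mem_powersetCard]
        exact ⟨Finset.subset_univ _, rfl⟩
    · intro v _ v' _ h
      funext i
      have := Finset.ext_iff.mp h i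
      simp only [Finset.mem_filter, Finset.mem_univ, true_and] at this
      revert this
      cases v i <;> cases v' i <;> cases c i <;> simp
  refine h1.trans ?_
  refine (Finset.card_biUnion_le).trans ?_
  apply Finset.sum_le_sum
  intro j _
  rw [Finset.card_powersetCard, Finset.card_univ, Fintype.card_fin]

lemma vol_bound (n r : ℕ) (h : r ≤ n) :
    (∑ j ∈ Finset.range (r+1), n.choose j) * 64 ^ (n - r) ≤ 65 ^ n := by
  have h65 : (65:ℕ) ^ n = ∑ j ∈ Finset.range (n+1), n.choose j * 64 ^ (n - j) := by
    have := add_pow (R := ℕ) 1 64 n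
    simp only [one_pow, one_mul, Nat.cast_id] at this
    rw [show (65:ℕ) = 1 + 64 by norm_num, this]
    apply Finset.sum_congr rfl
    intro j _
    ring
  rw [h65, Finset.sum_mul]
  calc ∑ j ∈ Finset.range (r+1), n.choose j * 64 ^ (n - r)
      ≤ ∑ j ∈ Finset.range (r+1), n.choose j * 64 ^ (n - j) := by
        apply Finset.sum_le_sum
        intro j hj
        rw [Finset.mem_range] at hj
        exact Nat.mul_le_mul_left _ (Nat.pow_le_pow_right (by norm_num) (by omega))
    _ ≤ ∑ j ∈ Finset.range (n+1), n.choose j * 64 ^ (n - j) :=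
        Finset.sum_le_sum_of_subset (Finset.range_subset_range.2 (by omega))

/-- Master counting inequality. -/
lemma master (n : ℕ) (hn : 10000 ≤ n) :
    n.choose (n/100) * (∑ j ∈ Finset.range (n/99 + 1), n.choose j) + 1
      < 2 ^ (n - n/100) := by
  set m := n / 100 with hm
  set b := n / 99 with hb
  have h100 : m * 100 ≤ n := Nat.div_mul_le_self n 100
  have h100' : n < m * 100 + 100 := by
    have := Nat.div_add_mod n 100
    have := Nat.mod_lt n (show 0 < 100 by norm_num)
    omega
  have h99 : b * 99 ≤ n := Nat.div_mul_le_self n 99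
  have h99' : n < b * 99 + 99 := by
    have := Nat.div_add_mod n 99
    have := Nat.mod_lt n (show 0 < 99 by norm_num)
    omega
  have hmn : m ≤ n := Nat.div_le_self n 100
  have hbn : b ≤ n := Nat.div_le_self n 99
  -- single choose bound
  have hC : n.choose m * 64 ^ (n - m) ≤ 65 ^ n := by
    calc n.choose m * 64 ^ (n - m)
        ≤ (∑ j ∈ Finset.range (m+1), n.choose j) * 64 ^ (n - m) := by
          apply Nat.mul_le_mul_right
          exact Finset.single_le_sum (f := fun j => n.choose j) (fun j _ => Nat.zero_le _)
            (Finset.self_mem_range_succ m)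
      _ ≤ 65 ^ n := vol_bound n m hmn
  have hV : (∑ j ∈ Finset.range (b+1), n.choose j) * 64 ^ (n - b) ≤ 65 ^ n :=
    vol_bound n b hbn
  -- multiply through by P := 64^(n-m) * 64^(n-b)
  set V := ∑ j ∈ Finset.range (b+1), n.choose j with hV_def
  set P := 64 ^ (n - m) * 64 ^ (n - b) with hP
  have hPpos : 0 < P := by positivity
  have lhs_bound : (n.choose m * V + 1) * P ≤ 2 * 65 ^ (2*n) := by
    have e1 : (n.choose m * V + 1) * P
        = (n.choose m * 64 ^ (n - m)) * (V * 64 ^ (n - b)) + P := by ring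
    rw [e1]
    have e2 : (65:ℕ) ^ (2*n) = 65 ^ n * 65 ^ n := by rw [two_mul, pow_add]
    have hP65 : P ≤ 65 ^ (2*n) := by
      calc P ≤ 65 ^ (n-m) * 65 ^ (n-b) :=
              Nat.mul_le_mul (Nat.pow_le_pow_left (by norm_num) _)
                (Nat.pow_le_pow_left (by norm_num) _)
        _ = 65 ^ ((n-m) + (n-b)) := (pow_add 65 _ _).symm
        _ ≤ 65 ^ (2*n) := Nat.pow_le_pow_right (by norm_num) (by omega)
    calc (n.choose m * 64 ^ (n - m)) * (V * 64 ^ (n - b)) + P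
        ≤ 65 ^ n * 65 ^ n + 65 ^ (2*n) := Nat.add_le_add (Nat.mul_le_mul hC hV) hP65
      _ = 2 * 65 ^ (2*n) := by rw [e2]; ring
  -- RHS with P
  set E := (n - m) + (6 * (n - m) + 6 * (n - b)) with hE
  have rhs_eq : 2 ^ (n - m) * P = 2 ^ E := by
    rw [hP, hE]
    rw [show (64:ℕ) = 2^6 by norm_num, ← pow_mul, ← pow_mul, ← pow_add, ← pow_add]
  have key : 2 * 65 ^ (2*n) < 2 ^ E := by
    have h1 : (4 * 65 ^ (2*n))^2 ≤ (2 ^ E)^2 := by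
      have e3 : (4 * 65 ^ (2*n))^2 = 16 * (65^4) ^ n := by
        rw [mul_pow, ← pow_mul, ← pow_mul, show 2*n*2 = 4*n from by ring]
        norm_num
      have e4 : ((2:ℕ) ^ E)^2 = 2 ^ (2 * E) := by rw [← pow_mul]; ring_nf
      rw [e3, e4]
      calc 16 * (65^4 : ℕ) ^ n ≤ 16 * (2^25 : ℕ) ^ n := by
            apply Nat.mul_le_mul_left
            exact Nat.pow_le_pow_left (by norm_num) n
        _ = 2 ^ (25 * n + 4) := by rw [← pow_mul]; rw [pow_add]; ring
        _ ≤ 2 ^ (2 * E) := by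
            apply Nat.pow_le_pow_right (by norm_num)
            omega
    have h2 : 4 * 65 ^ (2*n) ≤ 2 ^ E := by
      exact (Nat.pow_le_pow_iff_left (by norm_num)).mp h1
    calc 2 * 65 ^ (2*n) < 4 * 65 ^ (2*n) := by
          have : 0 < 65 ^ (2*n) := by positivity
          omega
      _ ≤ 2 ^ E := h2
  have final : (n.choose m * V + 1) * P < 2 ^ (n - m) * P := by
    calc (n.choose m * V + 1) * P ≤ 2 * 65 ^ (2*n) := lhs_bound
      _ < 2 ^ E := key
      _ = 2 ^ (n - m) * P := rhs_eq.symm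
  exact Nat.lt_of_mul_lt_mul_right final

/-- Greedy code construction. -/
lemma greedy (hn : 10000 ≤ n) (𝒮 : Finset (Finset (Fin n)))
    (h𝒮 : 𝒮 ⊆ Finset.powersetCard (n/100) (Finset.univ : Finset (Fin n))) :
    ∃ 𝒞 : Finset (Fin n → Bool),
      𝒞.card ≤ 𝒮.card ∧
      (∀ c ∈ 𝒞, c ≠ (fun _ => false)) ∧
      (∀ c ∈ 𝒞, ∀ c' ∈ 𝒞, c ≠ c' → n/99 + 1 ≤ hd c c') ∧
      (∀ S ∈ 𝒮, ∃ c ∈ 𝒞, ∀ i ∈ S, c i = false) := by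
  classical
  induction 𝒮 using Finset.induction_on with
  | empty =>
    exact ⟨∅, by simp⟩
  | @insert S 𝒮 hS ih =>
    have h𝒮' : 𝒮 ⊆ Finset.powersetCard (n/100) Finset.univ :=
      fun T hT => h𝒮 (Finset.mem_insert_of_mem hT)
    obtain ⟨𝒞, hcard, hnz, hdist, hcov⟩ := ih h𝒮'
    have hScard : S.card = n / 100 := by
      have := h𝒮 (Finset.mem_insert_self S 𝒮)
      rw [Finset.mem_powersetCard] at this
      exact this.2
    -- counting
    set A := Finset.univ.filter fun v : Fin n → Bool => ∀ i ∈ S, v i = false with hA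
    set Bad := (𝒞.biUnion fun c =>
        Finset.univ.filter fun v : Fin n → Bool => hd v c < n/99 + 1)
        ∪ {fun _ => false} with hBad
    have hBadcard : Bad.card < A.card := by
      have h1 : Bad.card ≤ 𝒞.card * (∑ j ∈ Finset.range (n/99 + 1), n.choose j) + 1 := by
        calc Bad.card ≤ (𝒞.biUnion fun c =>
              Finset.univ.filter fun v : Fin n → Bool => hd v c < n/99 + 1).card + 1 := by
              refine (Finset.card_union_le _ _).trans ?_
              simp
          _ ≤ 𝒞.card * (∑ j ∈ Finset.range (n/99 + 1), n.choose j) + 1 := by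
              apply Nat.add_le_add_right
              refine (Finset.card_biUnion_le).trans ?_
              calc ∑ c ∈ 𝒞, (Finset.univ.filter
                      fun v : Fin n → Bool => hd v c < n/99 + 1).card
                  ≤ ∑ _c ∈ 𝒞, (∑ j ∈ Finset.range (n/99 + 1), n.choose j) :=
                    Finset.sum_le_sum fun c _ => card_ball c _
                _ = 𝒞.card * _ := by rw [Finset.sum_const, smul_eq_mul]
      have h2 : 𝒞.card ≤ n.choose (n/100) := by
        calc 𝒞.card ≤ 𝒮.card := hcard
          _ ≤ (Finset.powersetCard (n/100) (Finset.univ : Finset (Fin n))).card :=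
            Finset.card_le_card h𝒮'
          _ = n.choose (n/100) := by
            rw [Finset.card_powersetCard, Finset.card_univ, Fintype.card_fin]
      calc Bad.card ≤ 𝒞.card * (∑ j ∈ Finset.range (n/99 + 1), n.choose j) + 1 := h1
        _ ≤ n.choose (n/100) * (∑ j ∈ Finset.range (n/99 + 1), n.choose j) + 1 :=
            Nat.add_le_add_right (Nat.mul_le_mul_right _ h2) 1
        _ < 2 ^ (n - n/100) := master n hn
        _ = A.card := by rw [hA, card_subcube, hScard]
    have hAnotsub : ¬ A ⊆ Bad := fun hsub =>
      absurd (Finset.card_le_card hsub) (Nat.not_le.mpr hBadcard)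
    obtain ⟨v, hvA, hvBad⟩ := Finset.not_subset.mp hAnotsub
    rw [hA, Finset.mem_filter] at hvA
    have hvz : v ≠ (fun _ => false) := by
      intro h
      apply hvBad
      rw [hBad]
      exact Finset.mem_union_right _ (by simp [h])
    have hvfar : ∀ c ∈ 𝒞, n/99 + 1 ≤ hd v c := by
      intro c hc
      by_contra hlt
      apply hvBad
      rw [hBad]
      apply Finset.mem_union_left
      refine Finset.mem_biUnion.mpr ⟨c, hc, ?_⟩
      rw [Finset.mem_filter]
      exact ⟨Finset.mem_univ _, by omega⟩
    refine ⟨insert v 𝒞, ?_, ?_, ?_, ?_⟩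
    · calc (insert v 𝒞).card ≤ 𝒞.card + 1 := Finset.card_insert_le _ _
        _ ≤ 𝒮.card + 1 := Nat.add_le_add_right hcard 1
        _ = (insert S 𝒮).card := (Finset.card_insert_of_notMem hS).symm
    · intro c hc
      rcases Finset.mem_insert.mp hc with rfl | hc
      · exact hvz
      · exact hnz c hc
    · intro c hc c' hc' hne
      rcases Finset.mem_insert.mp hc with rfl | hc
      · rcases Finset.mem_insert.mp hc' with rfl | hc'
        · exact absurd rfl hne
        · exact hvfar c' hc'
      · rcases Finset.mem_insert.mp hc' with heq | hc'
        · rw [heq, hd_comm]; exact hvfar c hc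
        · exact hdist c hc c' hc' hne
    · intro T hT
      rcases Finset.mem_insert.mp hT with rfl | hT
      · exact ⟨v, Finset.mem_insert_self _ _, hvA.2⟩
      · obtain ⟨c, hc, hcc⟩ := hcov T hT
        exact ⟨c, Finset.mem_insert_of_mem hc, hcc⟩

lemma isBlock_iff {𝒞 : Finset (Fin n → Bool)} {x : Fin n → Bool}
    (hx : x ∉ 𝒞) (B : Finset (Fin n)) :
    BS.IsBlock (fun v => decide (v ∈ 𝒞)) x B ↔
      ∃ c ∈ 𝒞, B = Finset.univ.filter fun i => x i ≠ c i := by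
  unfold BS.IsBlock
  simp only [decide_eq_decide, decide_eq_true_eq]
  constructor
  · intro h
    have hmem : BS.flipSet x B ∈ 𝒞 := by
      by_contra hno
      exact h (by simp [hno, hx])
    exact ⟨BS.flipSet x B, hmem, (flipSet_eq_iff x _ B).mp rfl⟩
  · rintro ⟨c, hc, rfl⟩
    have : BS.flipSet x (Finset.univ.filter fun i => x i ≠ c i) = c :=
      (flipSet_eq_iff x c _).mpr rfl
    rw [this]
    simp [hc, hx]

/-- helper : from m ≤ k, 0 < m get 1 ≤ k * (1/m) in ℝ -/
lemma one_le_mul_one_div {m k : ℕ} (hm : 0 < m) (h : m ≤ k) : (1:ℝ) ≤ (k:ℝ) * (1 / (m:ℝ)) := by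
  have hm' : (0:ℝ) < m := by exact_mod_cast hm
  rw [mul_one_div, le_div_iff₀ hm', one_mul]
  exact_mod_cast h

/-- The central fbs bound. -/
lemma fbs_bound {𝒞 : Finset (Fin n → Bool)} (hn : 10000 ≤ n)
    (hCne : 𝒞.Nonempty)
    (hdist : ∀ c ∈ 𝒞, ∀ c' ∈ 𝒞, c ≠ c' → n/99 + 1 ≤ hd c c')
    {x : Fin n → Bool} (hx : x ∉ 𝒞) :
    BS.fbsAt (fun v => decide (v ∈ 𝒞)) x ≤ 200 := by
  classical
  set Δ := n / 99 + 1 with hΔ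
  have h99 : n / 99 * 99 ≤ n := Nat.div_mul_le_self n 99
  have h99' : n < n / 99 * 99 + 99 := by
    have := Nat.div_add_mod n 99
    have := Nat.mod_lt n (show 0 < 99 by norm_num)
    omega
  obtain ⟨c0, hc0, hmin⟩ := Finset.exists_min_image 𝒞 (hd x) hCne
  set d := hd x c0 with hd_def
  have hd1 : 1 ≤ d := by
    rcases Nat.eq_zero_or_pos d with h | h
    · exact absurd (hd_eq_zero h ▸ hc0) hx
    · exact h
  have hdpos : (0:ℝ) < d := by exact_mod_cast hd1
  have hΔpos : (0:ℝ) < Δ := by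
    have : 0 < Δ := by omega
    exact_mod_cast this
  have hblocksize : ∀ B : Finset (Fin n), BS.IsBlock (fun v => decide (v ∈ 𝒞)) x B →
      d ≤ B.card := by
    intro B hB
    obtain ⟨c, hc, rfl⟩ := (isBlock_iff hx B).mp hB
    exact hmin c hc
  by_cases hcase : Δ ≤ 2 * d
  · -- far case: uniform weight 1/d
    apply fbsAt_le_of_cover (fun _ => 1 / (d:ℝ))
    · intro i; positivity
    · intro B hB
      rw [Finset.sum_const, nsmul_eq_mul]
      exact one_le_mul_one_div hd1 (hblocksize B hB)
    · rw [Finset.sum_const, nsmul_eq_mul, Finset.card_univ, Fintype.card_fin,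
        mul_one_div, div_le_iff₀ hdpos]
      have : n ≤ 200 * d := by omega
      calc (n:ℝ) ≤ ((200 * d : ℕ) : ℝ) := by exact_mod_cast this
        _ = 200 * d := by push_cast; ring
  · -- near case
    push_neg at hcase
    have hDcard : (Finset.univ.filter fun i => x i ≠ c0 i).card = d := rfl
    apply fbsAt_le_of_cover
      (fun i => (if i ∈ Finset.univ.filter fun j => x j ≠ c0 j then 1 / (d:ℝ) else 0)
        + 2 / (Δ:ℝ))
    · intro i
      by_cases h : i ∈ Finset.univ.filter fun j => x j ≠ c0 j <;> simp [h] <;> positivity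
    · intro B hB
      obtain ⟨c, hc, hBeq⟩ := (isBlock_iff hx B).mp hB
      rw [Finset.sum_add_distrib]
      by_cases hcc0 : c = c0
      · have e1 : ∑ i ∈ B, (if i ∈ Finset.univ.filter fun j => x j ≠ c0 j
            then 1 / (d:ℝ) else 0) = 1 := by
          rw [hBeq, hcc0]
          rw [Finset.sum_ite_of_true (fun i hi => hi), Finset.sum_const, nsmul_eq_mul,
            hDcard, mul_one_div, div_self (ne_of_gt hdpos)]
        rw [e1]
        have e2 : (0:ℝ) ≤ ∑ _i ∈ B, 2 / (Δ:ℝ) := by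
          apply Finset.sum_nonneg; intro i _; positivity
        linarith
      · have hBcard : B.card = hd x c := by rw [hBeq]; rfl
        have htri : Δ ≤ hd x c + d := by
          calc Δ ≤ hd c c0 := hdist c hc c0 hc0 hcc0
            _ ≤ hd c x + hd x c0 := hd_triangle c x c0
            _ = hd x c + d := by rw [hd_comm c x]
        have hB2 : Δ ≤ 2 * B.card := by omega
        have part1 : (0:ℝ) ≤ ∑ i ∈ B, (if i ∈ Finset.univ.filter fun j => x j ≠ c0 j
            then 1 / (d:ℝ) else 0) := by
          apply Finset.sum_nonneg
          intro i _
          by_cases h : i ∈ Finset.univ.filter fun j => x j ≠ c0 j <;> simp [h] <;> positivity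
        have part2 : (1:ℝ) ≤ ∑ _i ∈ B, 2 / (Δ:ℝ) := by
          rw [Finset.sum_const, nsmul_eq_mul]
          have hΔ1 : 0 < Δ := by omega
          have := one_le_mul_one_div hΔ1 hB2
          calc (1:ℝ) ≤ ((2 * B.card : ℕ) : ℝ) * (1 / (Δ:ℝ)) := one_le_mul_one_div hΔ1 hB2
            _ = (B.card : ℝ) * (2 / (Δ:ℝ)) := by push_cast; ring
        linarith
    · rw [Finset.sum_add_distrib]
      have e1 : ∑ i : Fin n, (if i ∈ Finset.univ.filter fun j => x j ≠ c0 j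
          then 1 / (d:ℝ) else 0) = 1 := by
        rw [Finset.sum_ite_mem, Finset.univ_inter, Finset.sum_const, nsmul_eq_mul,
          hDcard, mul_one_div, div_self (ne_of_gt hdpos)]
      have e2 : ∑ _i : Fin n, 2 / (Δ:ℝ) ≤ 199 := by
        rw [Finset.sum_const, nsmul_eq_mul, Finset.card_univ, Fintype.card_fin]
        rw [mul_div_assoc', div_le_iff₀ hΔpos]
        have h2n : 2 * n ≤ 199 * Δ := by omega
        calc (n:ℝ) * 2 = ((2 * n : ℕ) : ℝ) := by push_cast; ring
          _ ≤ ((199 * Δ : ℕ) : ℝ) := by exact_mod_cast h2n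
          _ = 199 * Δ := by push_cast; ring
      linarith
-- univ is always a certificate
lemma CAt_le_n (f : (Fin n → Bool) → Bool) (x : Fin n → Bool) : BS.CAt f x ≤ n := by
  apply Nat.sInf_le
  refine ⟨Finset.univ, ?_, by rw [Finset.card_univ, Fintype.card_fin]⟩
  intro B hB
  rw [Finset.univ_inter]
  exact block_nonempty hB

end BSAux

open BS in
/-- For every sufficiently large `n` there is a boolean function
`g` on `n` variables with `g(0ⁿ) = 0`, `bs*_{0ⁿ}(g) ≤ 200`, more generally
`bs*_0(g) ≤ 200`, and `C_0(g) ≥ n/100`. -/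
theorem exists_good_inner_function :
    ∃ N : ℕ, ∀ n ≥ N, ∃ g : (Fin n → Bool) → Bool,
      g (fun _ => false) = false ∧
      fbsAt g (fun _ => false) ≤ 200 ∧
      fbsb g false ≤ 200 ∧
      (n : ℝ) / 100 ≤ (Cb g false : ℝ) := by
  classical
  refine ⟨10000, fun n hn => ?_⟩
  obtain ⟨𝒞, hcard, hnz, hdist, hcov⟩ := BSAux.greedy hn
    (Finset.powersetCard (n/100) (Finset.univ : Finset (Fin n))) (Finset.Subset.refl _)
  set g : (Fin n → Bool) → Bool := fun v => decide (v ∈ 𝒞) with hg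
  have hzero : (fun _ => false : Fin n → Bool) ∉ 𝒞 := fun h => (hnz _ h) rfl
  have hg0 : g (fun _ => false) = false := by
    rw [hg]; simp [hzero]
  have hmn : n / 100 ≤ n := Nat.div_le_self n 100
  have huniv : (Finset.univ : Finset (Fin n)).card = n := by
    rw [Finset.card_univ, Fintype.card_fin]
  have hCne : 𝒞.Nonempty := by
    obtain ⟨S0, hS0⟩ : (Finset.powersetCard (n/100)
        (Finset.univ : Finset (Fin n))).Nonempty :=
      Finset.powersetCard_nonempty.mpr (by rw [huniv]; exact hmn)
    obtain ⟨c, hc, -⟩ := hcov S0 hS0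
    exact ⟨c, hc⟩
  have hfbs : ∀ x : Fin n → Bool, g x = false → fbsAt g x ≤ 200 := by
    intro x hxf
    have hx : x ∉ 𝒞 := by
      intro h
      rw [hg] at hxf
      simp [h] at hxf
    exact BSAux.fbs_bound hn hCne hdist hx
  refine ⟨g, hg0, hfbs _ hg0, ?_, ?_⟩
  · -- fbsb
    apply Real.sSup_le _ (by norm_num)
    rintro s ⟨x, hxf, rfl⟩
    exact hfbs x hxf
  · -- certificate complexity
    have hCAt : n / 100 + 1 ≤ CAt g (fun _ => false) := by
      apply le_csInf
      · exact ⟨n, Finset.univ, (fun B hB => by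
          rw [Finset.univ_inter]; exact BSAux.block_nonempty hB), huniv.symm⟩
      · rintro k ⟨S, hhit, rfl⟩
        by_contra hlt
        push_neg at hlt
        have hScard : S.card ≤ n / 100 := by omega
        obtain ⟨S', hSS', hS'card⟩ := Finset.exists_superset_card_eq hScard
          (by rw [Fintype.card_fin]; exact hmn)
        have hS'mem : S' ∈ Finset.powersetCard (n/100) (Finset.univ : Finset (Fin n)) := by
          rw [Finset.mem_powersetCard]
          exact ⟨Finset.subset_univ _, hS'card⟩
        obtain ⟨c, hc, hcS'⟩ := hcov S' hS'mem
        have hblk : BS.IsBlock g (fun _ => false)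
            (Finset.univ.filter fun i => (fun _ => false : Fin n → Bool) i ≠ c i) := by
          rw [BSAux.isBlock_iff hzero]
          exact ⟨c, hc, rfl⟩
        obtain ⟨i, hi⟩ := hhit _ hblk
        rw [Finset.mem_inter, Finset.mem_filter] at hi
        have h1 : c i = false := hcS' i (hSS' hi.1)
        have h2 : (false : Bool) ≠ c i := hi.2.2
        exact h2 h1.symm
    have hmem : CAt g (fun _ => false) ∈
        {k | ∃ x, g x = false ∧ k = CAt g x} := ⟨_, hg0, rfl⟩
    have hbdd : BddAbove {k | ∃ x : Fin n → Bool, g x = false ∧ k = CAt g x} := by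
      refine ⟨n, ?_⟩
      rintro k ⟨x, -, rfl⟩
      exact BSAux.CAt_le_n g x
    have hCb : n / 100 + 1 ≤ Cb g false :=
      le_trans hCAt (le_csSup hbdd hmem)
    have hfrac : (n:ℝ) / 100 ≤ ((n / 100 + 1 : ℕ) : ℝ) := by
      have h100 : n / 100 * 100 ≤ n := Nat.div_mul_le_self n 100
      have h100' : n < n / 100 * 100 + 100 := by
        have := Nat.div_add_mod n 100
        have := Nat.mod_lt n (show 0 < 100 by norm_num)
        omega
      rw [div_le_iff₀ (by norm_num : (0:ℝ) < 100)]
      calc (n:ℝ) ≤ ((n / 100 * 100 + 100 : ℕ) : ℝ) := by exact_mod_cast le_of_lt h100'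
        _ = ((n / 100 + 1 : ℕ) : ℝ) * 100 := by push_cast; ring
    calc (n:ℝ) / 100 ≤ ((n / 100 + 1 : ℕ) : ℝ) := hfrac
      _ ≤ (Cb g false : ℝ) := by exact_mod_cast hCb
end

section
/- Let s ≥ 2, let n = s(s−1)/2, and identify the n input bits with the edges of the complete graph K_s on vertex set [s]. For i ∈ [s], let x^i ∈ {0,1}^n be the indicator of the star H_i consisting of all edges incident to vertex i. Define g : {0,1}^n → {0,1} by g(x) = 1 iff x = x^i for some i ∈ [s]. Then g(0^n) = 0, the fractional block sensitivity at the all-zeros input satisfies bs*_{0^n}(g) ≥ s/2, and for every a ∈ g^{-1}(0) the block sensitivity satisfies bs_a(g) ≤ 3 (i.e., bs_0(g) ≤ 3). -/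
open Filter

namespace BS

/-- The edges of the complete graph `K_s` on vertex set `Fin s`, represented as
ordered pairs `(a, b)` with `a < b`. -/
abbrev Edge (s : ℕ) := {p : Fin s × Fin s // p.1 < p.2}

/-- The indicator of the star `H i`: the set of edges incident to vertex `i`. -/
def starInput (s : ℕ) (i : Fin s) : Edge s → Bool :=
  fun e => decide (e.val.1 = i ∨ e.val.2 = i)

/-- The function `g` of Theorem 5.2: on inputs indexed by the edges of `K_s`,
`g x = 1` iff `x` is the indicator of a star `H i`. -/
def starFn (s : ℕ) : (Edge s → Bool) → Bool :=
  fun x => decide (∃ i : Fin s, x = starInput s i)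

end BS

namespace BS

variable {s : ℕ}

/-- The star block: edges incident to vertex `i`, as a finset. -/
def starBlock (s : ℕ) (i : Fin s) : Finset (Edge s) :=
  Finset.univ.filter (fun e => e.val.1 = i ∨ e.val.2 = i)

lemma mem_starBlock {i : Fin s} {e : Edge s} :
    e ∈ starBlock s i ↔ (e.val.1 = i ∨ e.val.2 = i) := by
  simp [starBlock]

lemma flip0_starBlock (i : Fin s) :
    flipSet (fun _ => false) (starBlock s i) = starInput s i := by
  funext e
  by_cases h : e.val.1 = i ∨ e.val.2 = i <;>
    simp [flipSet, mem_starBlock, starInput, h]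

lemma starFn_starInput (i : Fin s) : starFn s (starInput s i) = true := by
  simp only [starFn, decide_eq_true_eq]
  exact ⟨i, rfl⟩

lemma starFn_zero (hs : 2 ≤ s) : starFn s (fun _ => false) = false := by
  simp only [starFn, decide_eq_false_iff_not]
  rintro ⟨i, hi⟩
  have key : ∀ e : Edge s, starInput s i e = false := fun e => (congrFun hi e).symm
  obtain ⟨j, hj⟩ := Fintype.exists_ne_of_one_lt_card
    (by simpa using (by omega : 1 < s)) i
  rcases lt_or_gt_of_ne hj with h | h
  · have := key ⟨(j, i), h⟩; simp [starInput] at this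
  · have := key ⟨(i, j), h⟩; simp [starInput] at this

lemma not_isBlock_empty {I : Type*} [Fintype I] [DecidableEq I]
    (f : (I → Bool) → Bool) (x : I → Bool) : ¬ IsBlock f x ∅ := by
  have : flipSet x ∅ = x := by funext i; simp [flipSet]
  simp [IsBlock, this]

lemma blocks_le_three (hs : 2 ≤ s) {a : Edge s → Bool} (ha : starFn s a = false)
    {k : ℕ} (B : Fin k → Finset (Edge s)) (hB : ∀ t, IsBlock (starFn s) a (B t))
    (hd : ∀ t t', t ≠ t' → Disjoint (B t) (B t')) : k ≤ 3 := by
  by_contra hk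
  push_neg at hk
  have hstar : ∀ t, ∃ i : Fin s, flipSet a (B t) = starInput s i := by
    intro t
    have h1 := hB t
    rw [IsBlock, ha] at h1
    have h2 : starFn s (flipSet a (B t)) = true := by
      cases hft : starFn s (flipSet a (B t)) with
      | false => exact absurd hft h1
      | true => rfl
    simpa [starFn, decide_eq_true_eq] using h2
  choose i hi using hstar
  have hinj : ∀ t t', t ≠ t' → i t ≠ i t' := by
    intro t t' htt heq
    have hBe : B t = B t' := by
      ext e
      have h1 := congrFun (hi t) e
      have h2 := congrFun (hi t') e
      rw [heq, ← h2] at h1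
      by_cases he : e ∈ B t <;> by_cases he' : e ∈ B t' <;>
        simp only [flipSet, he, he', if_true, if_false, ite_true, ite_false] at h1 ⊢ <;>
        first
          | tauto
          | (cases a e <;> simp_all)
    have hemp : B t = ∅ := by
      have hdd := hd t t' htt
      rw [hBe] at hdd
      rw [hBe]; simpa using disjoint_self.mp hdd
    exact not_isBlock_empty _ _ (hemp ▸ hB t)
  set t0 : Fin k := ⟨0, by omega⟩ with ht0
  set t1 : Fin k := ⟨1, by omega⟩ with ht1
  set t2 : Fin k := ⟨2, by omega⟩ with ht2
  set t3 : Fin k := ⟨3, by omega⟩ with ht3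
  have ne01 : t0 ≠ t1 := by simp [ht0, ht1, Fin.ext_iff]
  have ne23 : t2 ≠ t3 := by simp [ht2, ht3, Fin.ext_iff]
  have h01 : i t0 ≠ i t1 := hinj _ _ ne01
  have hedge : ∃ e : Edge s, ∀ w : Fin s,
      starInput s w e = true ↔ (w = i t0 ∨ w = i t1) := by
    rcases lt_or_gt_of_ne h01 with h | h
    · exact ⟨⟨(i t0, i t1), h⟩, fun w => by
        simp only [starInput, decide_eq_true_eq]; constructor <;> rintro (h|h) <;> simp [h]⟩
    · exact ⟨⟨(i t1, i t0), h⟩, fun w => by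
        simp only [starInput, decide_eq_true_eq]; constructor <;> rintro (h|h) <;> simp [h]⟩
  obtain ⟨e, he⟩ := hedge
  have heq : ∀ t, (if e ∈ B t then !(a e) else a e) = starInput s (i t) e := by
    intro t
    simpa [flipSet] using congrFun (hi t) e
  have h0t : starInput s (i t0) e = true := (he _).mpr (Or.inl rfl)
  have h1t : starInput s (i t1) e = true := (he _).mpr (Or.inr rfl)
  have h2f : starInput s (i t2) e = false := by
    rw [← Bool.not_eq_true, he]
    rintro (h | h)
    · exact hinj t2 t0 (by simp [ht0, ht2, Fin.ext_iff]) h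
    · exact hinj t2 t1 (by simp [ht1, ht2, Fin.ext_iff]) h
  have h3f : starInput s (i t3) e = false := by
    rw [← Bool.not_eq_true, he]
    rintro (h | h)
    · exact hinj t3 t0 (by simp [ht0, ht3, Fin.ext_iff]) h
    · exact hinj t3 t1 (by simp [ht1, ht3, Fin.ext_iff]) h
  have m0 := heq t0; rw [h0t] at m0
  have m1 := heq t1; rw [h1t] at m1
  have m2 := heq t2; rw [h2f] at m2
  have m3 := heq t3; rw [h3f] at m3
  cases hae : a e with
  | false =>
      rw [hae] at m0 m1
      have e0 : e ∈ B t0 := by by_contra h; simp [h] at m0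
      have e1 : e ∈ B t1 := by by_contra h; simp [h] at m1
      exact Finset.disjoint_left.mp (hd t0 t1 ne01) e0 e1
  | true =>
      rw [hae] at m2 m3
      have e2 : e ∈ B t2 := by by_contra h; simp [h] at m2
      have e3 : e ∈ B t3 := by by_contra h; simp [h] at m3
      exact Finset.disjoint_left.mp (hd t2 t3 ne23) e2 e3

lemma bsAt_le_three (hs : 2 ≤ s) (a : Edge s → Bool) (ha : starFn s a = false) :
    bsAt (starFn s) a ≤ 3 := by
  apply csSup_le
  · exact ⟨0, Fin.elim0, fun t => t.elim0, fun t => t.elim0⟩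
  · rintro k ⟨B, hB, hd⟩
    exact blocks_le_three hs ha B hB hd

end BS

namespace BS

variable {s : ℕ}

lemma countN (S : Finset (Finset (Edge s))) :
    ∑ B ∈ S, (Finset.univ.filter (fun i : Fin s => B = starBlock s i)).card
      = (Finset.univ.filter (fun i : Fin s => starBlock s i ∈ S)).card := by
  simp_rw [Finset.card_filter]
  rw [Finset.sum_comm]
  refine Finset.sum_congr rfl (fun i _ => ?_)
  exact Finset.sum_ite_eq' S (starBlock s i) (fun _ => 1)

lemma fbs_ge (hs : 2 ≤ s) : (s : ℝ) / 2 ≤ fbsAt (starFn s) (fun _ => false) := by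
  classical
  set lam : Finset (Edge s) → ℝ := fun B =>
    ((Finset.univ.filter (fun i : Fin s => B = starBlock s i)).card : ℝ) / 2 with hlam
  have lam_nonneg : ∀ B, 0 ≤ lam B := fun B => by positivity
  have lam_block : ∀ B, ¬ IsBlock (starFn s) (fun _ => false) B → lam B = 0 := by
    intro B hB
    by_contra h
    have hex : ∃ i, B = starBlock s i := by
      by_contra hne
      push_neg at hne
      apply h
      rw [hlam]
      simp only
      rw [Finset.filter_false_of_mem (fun i _ => hne i), Finset.card_empty]
      norm_num
    obtain ⟨i, rfl⟩ := hex
    apply hB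
    rw [IsBlock, flip0_starBlock, starFn_starInput, starFn_zero hs]
    simp
  have lam_sum : ∀ S : Finset (Finset (Edge s)),
      ∑ B ∈ S, lam B
        = ((Finset.univ.filter (fun i : Fin s => starBlock s i ∈ S)).card : ℝ) / 2 := by
    intro S
    rw [hlam]
    simp only
    rw [← Finset.sum_div, ← Nat.cast_sum, countN]
  have lam_edge : ∀ e : Edge s,
      ∑ B ∈ Finset.univ.filter (fun B : Finset (Edge s) => e ∈ B), lam B ≤ 1 := by
    intro e
    rw [lam_sum]
    have : Finset.univ.filter
        (fun i : Fin s => starBlock s i ∈ Finset.univ.filter (fun B : Finset (Edge s) => e ∈ B))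
        = {e.val.1, e.val.2} := by
      ext i
      simp [mem_starBlock, eq_comm]
    rw [this]
    have hne : e.val.1 ≠ e.val.2 := ne_of_lt e.prop
    rw [Finset.card_insert_of_notMem (by simpa using hne), Finset.card_singleton]
    norm_num
  have lam_total : ∑ B : Finset (Edge s), lam B = (s : ℝ) / 2 := by
    rw [lam_sum]
    simp
  have hmem : (s : ℝ) / 2 ∈ {r | ∃ lam : Finset (Edge s) → ℝ, (∀ B, 0 ≤ lam B) ∧
      (∀ B, ¬ IsBlock (starFn s) (fun _ => false) B → lam B = 0) ∧
      (∀ i : Edge s, ∑ B ∈ Finset.univ.filter (fun B : Finset (Edge s) => i ∈ B), lam B ≤ 1) ∧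
      r = ∑ B : Finset (Edge s), lam B} :=
    ⟨lam, lam_nonneg, lam_block, lam_edge, lam_total.symm⟩
  have hbdd : BddAbove {r | ∃ lam : Finset (Edge s) → ℝ, (∀ B, 0 ≤ lam B) ∧
      (∀ B, ¬ IsBlock (starFn s) (fun _ => false) B → lam B = 0) ∧
      (∀ i : Edge s, ∑ B ∈ Finset.univ.filter (fun B : Finset (Edge s) => i ∈ B), lam B ≤ 1) ∧
      r = ∑ B : Finset (Edge s), lam B} := by
    refine ⟨(Fintype.card (Edge s) : ℝ), ?_⟩
    rintro r ⟨w, hw0, hwb, hwe, rfl⟩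
    have step1 : ∑ B : Finset (Edge s), w B ≤ ∑ B : Finset (Edge s), ∑ _e ∈ B, w B := by
      refine Finset.sum_le_sum (fun B _ => ?_)
      rcases B.eq_empty_or_nonempty with rfl | hBne
      · have : w ∅ = 0 := hwb ∅ (not_isBlock_empty _ _)
        simp [this]
      · rw [Finset.sum_const, nsmul_eq_mul]
        have h1 : (1 : ℝ) ≤ B.card := by
          exact_mod_cast Nat.one_le_iff_ne_zero.mpr (Finset.card_ne_zero_of_mem hBne.choose_spec)
        nlinarith [hw0 B]
    have step2 : ∑ B : Finset (Edge s), ∑ _e ∈ B, w B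
        = ∑ e : Edge s, ∑ B ∈ Finset.univ.filter (fun B : Finset (Edge s) => e ∈ B), w B := by
      simp_rw [Finset.sum_filter]
      rw [Finset.sum_comm]
      refine Finset.sum_congr rfl (fun B _ => ?_)
      rw [Finset.sum_ite_mem, Finset.univ_inter]
    calc ∑ B : Finset (Edge s), w B ≤ _ := step1
      _ = _ := step2
      _ ≤ ∑ _e : Edge s, (1 : ℝ) := Finset.sum_le_sum (fun e _ => hwe e)
      _ = (Fintype.card (Edge s) : ℝ) := by simp
  exact le_csSup hbdd hmem

end BS

open BS in
/-- For `s ≥ 2`, the function `g = starFn s` on the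
`s(s-1)/2` edge variables of `K_s` satisfies `g(0) = 0`, `bs*_{0}(g) ≥ s/2`,
and `bs_a(g) ≤ 3` for every `a ∈ g⁻¹(0)` (i.e. `bs_0(g) ≤ 3`). -/
theorem starFn_properties (s : ℕ) (hs : 2 ≤ s) :
    starFn s (fun _ => false) = false ∧
    (s : ℝ) / 2 ≤ fbsAt (starFn s) (fun _ => false) ∧
    (∀ a : Edge s → Bool, starFn s a = false → bsAt (starFn s) a ≤ 3) ∧
    bsb (starFn s) false ≤ 3 := by
  refine ⟨starFn_zero hs, fbs_ge hs, fun a ha => bsAt_le_three hs a ha, ?_⟩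
  apply csSup_le
  · exact ⟨bsAt (starFn s) (fun _ => false), fun _ => false, starFn_zero hs, rfl⟩
  · rintro k ⟨x, hx, rfl⟩
    exact bsAt_le_three hs x hx
end

section
/- For any boolean function g : {0,1}^n → {0,1} and any input z ∈ {0,1}^n, the (non-adaptive) randomized certificate complexity and the fractional certificate complexity satisfy RC^z(g) ≤ C*_z(g) ≤ 2 · RC^z(g); in particular RC^z(g) = Θ(C*_z(g)) with universal constants. -/
open Filter

namespace BS

/-- The (non-adaptive) randomized certificate complexity of `g` at `z`: the infimum
of `Σ_i lam i` over `lam : I → [0,1]` such that for every `z'` with `g z' ≠ g z`, a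
verifier querying bit `i` independently with probability `lam i` and rejecting on
any observed disagreement with `z` rejects `z'` with probability at least `1/2`;
equivalently `∏_{i : z' i ≠ z i} (1 - lam i) ≤ 1/2`. -/
noncomputable def RCAt {I : Type*} [Fintype I] [DecidableEq I]
    (g : (I → Bool) → Bool) (z : I → Bool) : ℝ :=
  sInf {r | ∃ lam : I → ℝ, (∀ i, 0 ≤ lam i ∧ lam i ≤ 1) ∧
    (∀ z' : I → Bool, g z' ≠ g z →
      ∏ i ∈ Finset.univ.filter (fun i => z' i ≠ z i), (1 - lam i) ≤ 1 / 2) ∧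
    r = ∑ i, lam i}

end BS


section Aux

open Finset

lemma BS.flipSet_filter {n : ℕ} (z : Fin n → Bool) (B : Finset (Fin n)) :
    Finset.univ.filter (fun i => BS.flipSet z B i ≠ z i) = B := by
  ext i
  simp only [Finset.mem_filter, Finset.mem_univ, true_and, BS.flipSet]
  by_cases h : i ∈ B <;> simp [h]

lemma BS.flipSet_diff {n : ℕ} (z z' : Fin n → Bool) :
    BS.flipSet z (Finset.univ.filter (fun i => z' i ≠ z i)) = z' := by
  funext i
  simp only [BS.flipSet, Finset.mem_filter, Finset.mem_univ, true_and]
  by_cases h : z' i = z i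
  · simp [h]
  · simp only [h, if_pos, Ne, not_false_iff]
    revert h; cases z i <;> cases z' i <;> simp

lemma weier {I : Type*} [DecidableEq I] (s : Finset I) (t : I → ℝ)
    (h0 : ∀ i ∈ s, 0 ≤ t i) (h1 : ∀ i ∈ s, t i ≤ 1) :
    1 - ∑ i ∈ s, t i ≤ ∏ i ∈ s, (1 - t i) := by
  induction s using Finset.cons_induction with
  | empty => simp
  | cons a s ha ih =>
    rw [Finset.prod_cons, Finset.sum_cons]
    have ha0 : 0 ≤ t a := h0 a (by simp)
    have ha1 : t a ≤ 1 := h1 a (by simp)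
    have ih' := ih (fun i hi => h0 i (by simp [hi])) (fun i hi => h1 i (by simp [hi]))
    have hs0 : 0 ≤ ∑ i ∈ s, t i := Finset.sum_nonneg (fun i hi => h0 i (by simp [hi]))
    nlinarith [mul_le_mul_of_nonneg_left ih' (by linarith : (0:ℝ) ≤ 1 - t a)]

end Aux

open BS in
/-- For any boolean function `g` and any input `z`,
`RC^z(g) ≤ C*_z(g) ≤ 2·RC^z(g)`; in particular the randomized certificate
complexity and the fractional certificate complexity agree up to universal
constants. -/
theorem RC_eq_fC {n : ℕ} (g : (Fin n → Bool) → Bool) (z : Fin n → Bool) :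
    RCAt g z ≤ fCAt g z ∧ fCAt g z ≤ 2 * RCAt g z := by
  classical
  have hblock_ne : ∀ B : Finset (Fin n), IsBlock g z B → B.Nonempty := by
    intro B hB
    rcases B.eq_empty_or_nonempty with h | h
    · exfalso
      apply hB
      have he : flipSet z B = z := by subst h; funext i; simp [flipSet]
      rw [he]
    · exact h
  -- the RC feasible set
  set SR : Set ℝ := {r | ∃ lam : Fin n → ℝ, (∀ i, 0 ≤ lam i ∧ lam i ≤ 1) ∧
    (∀ z' : Fin n → Bool, g z' ≠ g z →
      ∏ i ∈ Finset.univ.filter (fun i => z' i ≠ z i), (1 - lam i) ≤ 1 / 2) ∧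
    r = ∑ i, lam i} with hSR
  set SF : Set ℝ := {s | ∃ w : Fin n → ℝ, (∀ i, 0 ≤ w i ∧ w i ≤ 1) ∧
    (∀ B, IsBlock g z B → 1 ≤ ∑ i ∈ B, w i) ∧ s = ∑ i, w i} with hSF
  have hRC : RCAt g z = sInf SR := rfl
  have hfC : fCAt g z = sInf SF := rfl
  have hRbdd : BddBelow SR := by
    refine ⟨0, ?_⟩
    rintro r ⟨lam, h1, -, rfl⟩
    exact Finset.sum_nonneg (fun i _ => (h1 i).1)
  have hFbdd : BddBelow SF := by
    refine ⟨0, ?_⟩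
    rintro r ⟨w, h1, -, rfl⟩
    exact Finset.sum_nonneg (fun i _ => (h1 i).1)
  have hFne : SF.Nonempty := by
    refine ⟨∑ i : Fin n, (1:ℝ), fun _ => 1, fun i => ⟨zero_le_one, le_refl 1⟩, ?_, rfl⟩
    intro B hB
    have : (1:ℝ) ≤ B.card := by
      exact_mod_cast Finset.one_le_card.mpr (hblock_ne B hB)
    simpa using this
  have hRne : SR.Nonempty := by
    refine ⟨∑ i : Fin n, (1:ℝ), fun _ => 1, fun i => ⟨zero_le_one, le_refl 1⟩, ?_, rfl⟩
    intro z' hz'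
    have hne : z' ≠ z := fun h => hz' (by rw [h])
    obtain ⟨i, hi⟩ : ∃ i, z' i ≠ z i := by
      by_contra h; push_neg at h; exact hne (funext h)
    have : ∏ i ∈ Finset.univ.filter (fun i => z' i ≠ z i), (1 - (1:ℝ)) = 0 :=
      Finset.prod_eq_zero (Finset.mem_filter.mpr ⟨Finset.mem_univ i, hi⟩) (by ring)
    rw [this]; norm_num
  constructor
  · -- RC ≤ fC : every fractional certificate is an RC witness
    rw [hRC, hfC]
    refine csInf_le_csInf hRbdd hFne ?_
    rintro s ⟨w, hw01, hwB, rfl⟩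
    refine ⟨w, hw01, ?_, rfl⟩
    intro z' hz'
    set B := Finset.univ.filter (fun i => z' i ≠ z i) with hBdef
    have hBlk : IsBlock g z B := by
      unfold IsBlock
      rw [hBdef, BS.flipSet_diff z z']
      exact hz'
    have hsum : 1 ≤ ∑ i ∈ B, w i := hwB B hBlk
    have h1 : ∏ i ∈ B, (1 - w i) ≤ ∏ i ∈ B, Real.exp (-(w i)) := by
      refine Finset.prod_le_prod (fun i _ => by linarith [(hw01 i).2]) ?_
      intro i _
      linarith [Real.add_one_le_exp (-(w i))]
    have h2 : ∏ i ∈ B, Real.exp (-(w i)) = Real.exp (-∑ i ∈ B, w i) := by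
      rw [← Real.exp_sum]; congr 1; rw [← Finset.sum_neg_distrib]
    have h3 : Real.exp (-∑ i ∈ B, w i) ≤ Real.exp (-1) :=
      Real.exp_le_exp.mpr (by linarith)
    have h4 : Real.exp (-1) ≤ 1 / 2 := by
      rw [Real.exp_neg]
      rw [inv_le_comm₀ (Real.exp_pos 1) (by norm_num)]
      have := Real.add_one_le_exp 1
      linarith
    calc ∏ i ∈ B, (1 - w i) ≤ Real.exp (-∑ i ∈ B, w i) := h2 ▸ h1
      _ ≤ 1 / 2 := le_trans h3 h4
  · -- fC ≤ 2 RC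
    rw [hRC, hfC]
    have key : ∀ r ∈ SR, sInf SF ≤ 2 * r := by
      rintro r ⟨lam, hl01, hl, rfl⟩
      set w : Fin n → ℝ := fun i => min (2 * lam i) 1 with hwdef
      have hw01 : ∀ i, 0 ≤ w i ∧ w i ≤ 1 := fun i =>
        ⟨le_min (by linarith [(hl01 i).1]) zero_le_one, min_le_right _ _⟩
      have hwB : ∀ B, IsBlock g z B → 1 ≤ ∑ i ∈ B, w i := by
        intro B hB
        have hprod : ∏ i ∈ B, (1 - lam i) ≤ 1 / 2 := by
          have := hl (flipSet z B) hB
          rwa [BS.flipSet_filter z B] at this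
        have hwe := weier B lam (fun i _ => (hl01 i).1) (fun i _ => (hl01 i).2)
        have hhalf : (1:ℝ)/2 ≤ ∑ i ∈ B, lam i := by linarith
        by_cases hcase : ∀ i ∈ B, 2 * lam i ≤ 1
        · have : ∑ i ∈ B, w i = ∑ i ∈ B, 2 * lam i :=
            Finset.sum_congr rfl (fun i hi => min_eq_left (hcase i hi))
          rw [this, ← Finset.mul_sum]
          linarith
        · push_neg at hcase
          obtain ⟨i, hiB, hi⟩ := hcase
          have hwi : w i = 1 := min_eq_right (le_of_lt hi)
          calc (1:ℝ) = w i := hwi.symm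
            _ ≤ ∑ i ∈ B, w i :=
              Finset.single_le_sum (fun j _ => (hw01 j).1) hiB
      have hmem : (∑ i, w i) ∈ SF := ⟨w, hw01, hwB, rfl⟩
      calc sInf SF ≤ ∑ i, w i := csInf_le hFbdd hmem
        _ ≤ ∑ i, 2 * lam i := Finset.sum_le_sum (fun i _ => min_le_left _ _)
        _ = 2 * ∑ i, lam i := by rw [Finset.mul_sum]
    have : sInf SF / 2 ≤ sInf SR := by
      refine le_csInf hRne (fun r hr => ?_)
      linarith [key r hr]
    linarith
end
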